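/- Under the stated setting, suppose in addition that max_{i,j∈{1,…,N}} |α_i(k) − α_j(k)| = o(∑_{i=1}^N α_i(k)) as k → ∞ (condition (c)). Then lim_{k→∞} E[V(k)] = 0, i.e., the multi-agent system achieves weak consensus (Corollary 1). -/

import Mathlib

open MeasureTheory Filter Matrix Asymptotics

private lemma aux_int_mul {Ω : Type*} {mΩ : MeasurableSpace Ω} {μ : Measure Ω}
    {f g : Ω → ℝ} (hf : MemLp f 2 μ) (hg : MemLp g 2 μ) :
    Integrable (fun ω => f ω * g ω) μ := by
  have h : MemLp (g • f) 1 μ := hf.smul hg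
  rw [← memLp_one_iff_integrable]
  have : (fun ω => f ω * g ω) = g • f := by
    funext ω; simp [mul_comm]
  rw [this]; exact h

private lemma aux_cross_zero {Ω : Type*} {mΩ : MeasurableSpace Ω} {μ : Measure Ω}
    [IsProbabilityMeasure μ] {m : MeasurableSpace Ω} (hm : m ≤ mΩ)
    {g h : Ω → ℝ} (hgm : StronglyMeasurable[m] g) (hg : MemLp g 2 μ) (hh : MemLp h 2 μ)
    (hcond : μ[h|m] =ᵐ[μ] 0) : ∫ ω, g ω * h ω ∂μ = 0 := by
  have hint : Integrable (g * h) μ := aux_int_mul hg hh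
  have hpull : μ[g * h|m] =ᵐ[μ] g * μ[h|m] :=
    condExp_mul_of_stronglyMeasurable_left hgm hint (hh.integrable one_le_two)
  have hz : μ[g * h|m] =ᵐ[μ] 0 :=
    hpull.trans (by filter_upwards [hcond] with ω hω; simp [hω])
  have h1 : ∫ ω, g ω * h ω ∂μ = ∫ ω, (μ[g * h|m]) ω ∂μ := (integral_condExp (f := g * h) hm).symm
  rw [h1, integral_congr_ae hz]
  simp

private lemma aux_memLp_div_const {Ω : Type*} {mΩ : MeasurableSpace Ω} {μ : Measure Ω}
    {f : Ω → ℝ} (hf : MemLp f 2 μ) (c : ℝ) : MemLp (fun ω => f ω / c) 2 μ := by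
  have := hf.const_mul c⁻¹
  simpa [div_eq_mul_inv, mul_comm] using this

private lemma aux_proj_sq_le {N : ℕ} (hN : 0 < N) (v : Fin N → ℝ) :
    ∑ i, (v i - (∑ j, v j) / N) ^ 2 ≤ ∑ i, (v i) ^ 2 := by
  have hN0 : (0:ℝ) < N := by exact_mod_cast hN
  set S := ∑ j, v j with hS
  have h1 : ∑ i, (v i - S / N) ^ 2
      = (∑ i, (v i)^2) - 2*(S/N)*S + N*(S/N)^2 := by
    have he : ∀ i ∈ Finset.univ, (v i - S/N)^2
        = (v i)^2 - 2*(S/N)*(v i) + (S/N)^2 := fun i _ => by ring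
    rw [Finset.sum_congr rfl he, Finset.sum_add_distrib, Finset.sum_sub_distrib,
      ← Finset.mul_sum, Finset.sum_const, Finset.card_univ, Fintype.card_fin, nsmul_eq_mul, ← hS]
  have h2 : ∑ i, (v i - S / N) ^ 2 = (∑ i, (v i)^2) - S^2/N := by
    rw [h1]; field_simp; ring
  rw [h2]
  have : 0 ≤ S^2/N := by positivity
  linarith

private lemma aux_cs_abs {N : ℕ} (f g : Fin N → ℝ) :
    ∑ i, |f i| * |g i| ≤ Real.sqrt (∑ i, (f i) ^ 2) * Real.sqrt (∑ i, (g i) ^ 2) := by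
  have h := Finset.sum_mul_sq_le_sq_mul_sq Finset.univ (fun i => |f i|) (fun i => |g i|)
  simp only [sq_abs] at h
  have hT : 0 ≤ ∑ i, |f i| * |g i| := Finset.sum_nonneg fun i _ => by positivity
  calc ∑ i, |f i| * |g i| = Real.sqrt ((∑ i, |f i| * |g i|)^2) := (Real.sqrt_sq hT).symm
    _ ≤ Real.sqrt ((∑ i, (f i)^2) * (∑ i, (g i)^2)) := Real.sqrt_le_sqrt h
    _ = _ := Real.sqrt_mul (by positivity) _

private lemma aux_noise_bound {N : ℕ} (hN : 0 < N) (a : Fin N → ℝ) (ha : ∀ i, 0 ≤ a i)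
    (s : ℝ) (hs : s = ∑ i, a i) (v : Fin N → ℝ) :
    ∑ i, (a i * v i - (∑ j, a j * v j) / N) ^ 2 ≤ s ^ 2 * ∑ i, (v i) ^ 2 := by
  calc ∑ i, (a i * v i - (∑ j, a j * v j) / N) ^ 2
      ≤ ∑ i, (a i * v i)^2 := aux_proj_sq_le hN _
    _ ≤ ∑ i, s^2 * (v i)^2 := by
        apply Finset.sum_le_sum
        intro i _
        have hais : a i ≤ s := by
          rw [hs]; exact Finset.single_le_sum (fun j _ => ha j) (Finset.mem_univ i)
        have h2 : (a i)^2 ≤ s^2 := by nlinarith [ha i]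
        rw [mul_pow]
        nlinarith [sq_nonneg (v i)]
    _ = s^2 * ∑ i, (v i)^2 := by rw [Finset.mul_sum]

private lemma aux_seq_tendsto_zero (v a e : ℕ → ℝ) (hv : ∀ k, 0 ≤ v k)
    (ha0 : ∀ k, 0 ≤ a k) (ha1 : ∀ k, a k ≤ 1)
    (hadiv : Tendsto (fun n => ∑ k ∈ Finset.range n, a k) atTop atTop)
    (he0 : ∀ k, 0 ≤ e k) (hesum : Summable e)
    (K : ℕ) (hrec : ∀ k, K ≤ k → v (k+1) ≤ (1 - a k) * v k + e k) :
    Tendsto v atTop (nhds 0) := by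
  rw [Metric.tendsto_atTop]
  intro ε hε
  have htail : Tendsto (fun n => ∑' k, e (k + n)) atTop (nhds 0) := tendsto_sum_nat_add e
  obtain ⟨K1, hK1tail, hK1K⟩ := (((htail.eventually (gt_mem_nhds (by linarith : (0:ℝ) < ε/4))).and
    (eventually_ge_atTop K)).exists)
  have key : ∀ n, K1 ≤ n → v n ≤ (∏ k ∈ Finset.Ico K1 n, (1 - a k)) * v K1
      + ∑ k ∈ Finset.Ico K1 n, e k := by
    intro n hn
    induction n, hn using Nat.le_induction with
    | base => simp
    | succ n hn ih =>
      have h1 : v (n+1) ≤ (1 - a n) * v n + e n := hrec n (le_trans hK1K hn)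
      have hP : 0 ≤ ∏ k ∈ Finset.Ico K1 n, (1 - a k) :=
        Finset.prod_nonneg fun k _ => by linarith [ha1 k]
      have hE : 0 ≤ ∑ k ∈ Finset.Ico K1 n, e k := Finset.sum_nonneg fun k _ => he0 k
      have han0 : 0 ≤ 1 - a n := by linarith [ha1 n]
      have han1 : 1 - a n ≤ 1 := by linarith [ha0 n]
      rw [Finset.prod_Ico_succ_top hn, Finset.sum_Ico_succ_top hn]
      have h2 : v (n+1) ≤ (1 - a n) * ((∏ k ∈ Finset.Ico K1 n, (1 - a k)) * v K1
          + ∑ k ∈ Finset.Ico K1 n, e k) + e n :=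
        le_trans h1 (by nlinarith [hv n])
      have h3 : (1 - a n) * ((∏ k ∈ Finset.Ico K1 n, (1 - a k)) * v K1
            + ∑ k ∈ Finset.Ico K1 n, e k) + e n
          ≤ ((∏ k ∈ Finset.Ico K1 n, (1 - a k)) * (1 - a n)) * v K1
            + ((∑ k ∈ Finset.Ico K1 n, e k) + e n) := by
        nlinarith [hv K1, mul_nonneg hP (hv K1)]
      linarith
  have hprod : ∀ n, (∏ k ∈ Finset.Ico K1 n, (1 - a k))
      ≤ Real.exp (-(∑ k ∈ Finset.Ico K1 n, a k)) := by
    intro n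
    calc (∏ k ∈ Finset.Ico K1 n, (1 - a k))
        ≤ ∏ k ∈ Finset.Ico K1 n, Real.exp (-(a k)) := by
          apply Finset.prod_le_prod (fun k _ => by linarith [ha1 k])
          intro k _
          have := Real.add_one_le_exp (-(a k))
          linarith
      _ = Real.exp (∑ k ∈ Finset.Ico K1 n, -(a k)) := (Real.exp_sum _ _).symm
      _ = _ := by rw [Finset.sum_neg_distrib]
  have hEsmall : ∀ n, (∑ k ∈ Finset.Ico K1 n, e k) ≤ ε/4 := by
    intro n
    rcases le_or_gt n K1 with h | h
    · rw [Finset.Ico_eq_empty (by omega)]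
      simp only [Finset.sum_empty]; linarith
    · have hsum' : Summable fun k => e (k + K1) := (summable_nat_add_iff K1).2 hesum
      have heq : ∑ k ∈ Finset.Ico K1 n, e k = ∑ k ∈ Finset.range (n - K1), e (k + K1) := by
        rw [Finset.sum_Ico_eq_sum_range]
        exact Finset.sum_congr rfl fun k _ => by rw [add_comm]
      rw [heq]
      have hle := Summable.sum_le_tsum (Finset.range (n - K1)) (fun k _ => he0 _) hsum'
      linarith [le_of_lt hK1tail]
  have hT : Tendsto (fun n => ∑ k ∈ Finset.Ico K1 n, a k) atTop atTop := by
    have h0 : Tendsto (fun n => (∑ k ∈ Finset.range n, a k)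
        + (-(∑ k ∈ Finset.range K1, a k))) atTop atTop :=
      tendsto_atTop_add_const_right atTop _ hadiv
    apply h0.congr'
    filter_upwards [eventually_ge_atTop K1] with n hn
    rw [Finset.sum_Ico_eq_sub _ hn]; ring
  have hexp : Tendsto (fun n => Real.exp (-(∑ k ∈ Finset.Ico K1 n, a k)) * v K1)
      atTop (nhds 0) := by
    have h1 : Tendsto (fun n => -(∑ k ∈ Finset.Ico K1 n, a k)) atTop atBot :=
      tendsto_neg_atBot_iff.mpr hT
    have h2 : Tendsto (fun n => Real.exp (-(∑ k ∈ Finset.Ico K1 n, a k))) atTop (nhds 0) :=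
      Real.tendsto_exp_atBot.comp h1
    simpa using h2.mul_const (v K1)
  obtain ⟨K2, hK2⟩ := eventually_atTop.mp
    (hexp.eventually (gt_mem_nhds (by linarith : (0:ℝ) < ε/2)))
  refine ⟨max K1 K2, fun n hn => ?_⟩
  have hn1 : K1 ≤ n := le_trans (le_max_left _ _) hn
  have hn2 : K2 ≤ n := le_trans (le_max_right _ _) hn
  have h1 := key n hn1
  have h2 : (∏ k ∈ Finset.Ico K1 n, (1 - a k)) * v K1
      ≤ Real.exp (-(∑ k ∈ Finset.Ico K1 n, a k)) * v K1 :=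
    mul_le_mul_of_nonneg_right (hprod n) (hv K1)
  have h3 := hK2 n hn2
  have h4 := hEsmall n
  rw [Real.dist_eq, sub_zero, abs_of_nonneg (hv n)]
  linarith

private lemma aux_key_bound {N : ℕ} (hN : 0 < N) (L : Matrix (Fin N) (Fin N) ℝ)
    (lam : ℝ)
    (hgap : ∀ v : Fin N → ℝ, (∑ i, v i) = 0 → lam * (∑ i, (v i)^2) ≤ v ⬝ᵥ L.mulVec v)
    (a : Fin N → ℝ) (ha : ∀ i, 0 < a i) (s d CL2 : ℝ)
    (hs : s = ∑ i, a i) (hd0 : 0 ≤ d) (hd : ∀ i j, |a i - a j| ≤ d)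
    (hCL2 : CL2 = ∑ i, ∑ j, (L i j)^2)
    (u : Fin N → ℝ) (hu0 : ∑ i, u i = 0) :
    ∑ i, (u i - (a i * (∑ j, L i j * u j)
        - (∑ p, a p * (∑ j, L p j * u j)) / N)) ^ 2
      ≤ (1 - 2*(s/N)*lam + 2*d*Real.sqrt CL2 + s^2*CL2) * ∑ i, (u i)^2 := by
  have hN0 : (0:ℝ) < N := by exact_mod_cast hN
  set Lu : Fin N → ℝ := fun i => ∑ j, L i j * u j with hLu
  set g : Fin N → ℝ := fun i => a i * Lu i with hg
  set U : ℝ := ∑ i, (u i)^2 with hU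
  have hU0 : 0 ≤ U := Finset.sum_nonneg fun i _ => sq_nonneg _
  have hCL2nn : 0 ≤ CL2 := by
    rw [hCL2]; exact Finset.sum_nonneg fun i _ => Finset.sum_nonneg fun j _ => sq_nonneg _
  -- ∑ Lu² ≤ CL2 * U
  have hLu_sq : ∑ i, (Lu i)^2 ≤ CL2 * U := by
    have h1 : ∀ i, (Lu i)^2 ≤ (∑ j, (L i j)^2) * U := by
      intro i
      have := Finset.sum_mul_sq_le_sq_mul_sq Finset.univ (fun j => L i j) u
      simpa [hLu, hU] using this
    calc ∑ i, (Lu i)^2 ≤ ∑ i, (∑ j, (L i j)^2) * U :=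
          Finset.sum_le_sum fun i _ => h1 i
      _ = CL2 * U := by rw [hCL2, Finset.sum_mul]
  -- quadratic form bound
  have hquad : lam * U ≤ ∑ i, u i * Lu i := by
    have := hgap u hu0
    have he : u ⬝ᵥ L.mulVec u = ∑ i, u i * Lu i := by
      simp [dotProduct, Matrix.mulVec, hLu]
    rw [he] at this
    simpa [hU] using this
  -- a i ≤ s
  have has : ∀ i, a i ≤ s := by
    intro i
    rw [hs]
    exact Finset.single_le_sum (fun j _ => (ha j).le) (Finset.mem_univ i)
  have hs0 : 0 < s := lt_of_lt_of_le (ha ⟨0, hN⟩) (has _)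
  -- |a i - s/N| ≤ d
  have habs : ∀ i, |a i - s/N| ≤ d := by
    intro i
    have h1 : a i - s/N = (∑ j, (a i - a j))/N := by
      rw [Finset.sum_sub_distrib, Finset.sum_const, Finset.card_univ, Fintype.card_fin,
        nsmul_eq_mul, ← hs]
      field_simp
    rw [h1, abs_div, abs_of_pos hN0]
    rw [div_le_iff₀ hN0]
    calc |∑ j, (a i - a j)| ≤ ∑ j, |a i - a j| := Finset.abs_sum_le_sum_abs _ _
      _ ≤ ∑ _j : Fin N, d := Finset.sum_le_sum fun j _ => hd i j
      _ = N * d := by rw [Finset.sum_const, Finset.card_univ, Fintype.card_fin, nsmul_eq_mul]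
      _ = d * N := by ring
  -- cross term lower bound
  have hcs : ∑ i, |u i| * |Lu i| ≤ Real.sqrt CL2 * U := by
    have h1 := aux_cs_abs u Lu
    have h2 : Real.sqrt (∑ i, (Lu i)^2) ≤ Real.sqrt (CL2 * U) := Real.sqrt_le_sqrt hLu_sq
    have h3 : Real.sqrt (CL2 * U) = Real.sqrt CL2 * Real.sqrt U := Real.sqrt_mul hCL2nn U
    have h4 : Real.sqrt U * Real.sqrt U = U := Real.mul_self_sqrt hU0
    have h5 : 0 ≤ Real.sqrt (∑ i, (u i)^2) := Real.sqrt_nonneg _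
    calc ∑ i, |u i| * |Lu i|
        ≤ Real.sqrt (∑ i, (u i)^2) * Real.sqrt (∑ i, (Lu i)^2) := h1
      _ ≤ Real.sqrt U * (Real.sqrt CL2 * Real.sqrt U) := by
          rw [← hU]
          exact mul_le_mul_of_nonneg_left (by rw [← h3]; exact h2) h5
      _ = Real.sqrt CL2 * (Real.sqrt U * Real.sqrt U) := by ring
      _ = Real.sqrt CL2 * U := by rw [h4]
  have hug : (s/N) * (∑ i, u i * Lu i) - d * (Real.sqrt CL2 * U) ≤ ∑ i, u i * g i := by
    have h1 : ∑ i, u i * g i = (s/N) * (∑ i, u i * Lu i) + ∑ i, (a i - s/N) * (u i * Lu i) := by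
      rw [Finset.mul_sum, ← Finset.sum_add_distrib]
      exact Finset.sum_congr rfl fun i _ => by simp only [hg]; ring
    have h2 : -(d * (Real.sqrt CL2 * U)) ≤ ∑ i, (a i - s/N) * (u i * Lu i) := by
      have h3 : ∀ i, -(d * (|u i| * |Lu i|)) ≤ (a i - s/N) * (u i * Lu i) := by
        intro i
        have hb : |(a i - s/N) * (u i * Lu i)| ≤ d * (|u i| * |Lu i|) := by
          rw [abs_mul, abs_mul]
          exact mul_le_mul (habs i) le_rfl (by positivity) hd0
        linarith [neg_abs_le ((a i - s/N) * (u i * Lu i))]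
      calc -(d * (Real.sqrt CL2 * U)) ≤ -(d * ∑ i, |u i| * |Lu i|) := by
            have := mul_le_mul_of_nonneg_left hcs hd0
            linarith
        _ = ∑ i, -(d * (|u i| * |Lu i|)) := by rw [Finset.mul_sum, ← Finset.sum_neg_distrib]
        _ ≤ ∑ i, (a i - s/N) * (u i * Lu i) := Finset.sum_le_sum fun i _ => h3 i
    linarith
  -- q part
  have hq_sq : ∑ i, (g i - (∑ p, g p)/N)^2 ≤ s^2 * (CL2 * U) := by
    calc ∑ i, (g i - (∑ p, g p)/N)^2 ≤ ∑ i, (g i)^2 := aux_proj_sq_le hN g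
      _ ≤ ∑ i, s^2 * (Lu i)^2 := by
          apply Finset.sum_le_sum
          intro i _
          simp only [hg, mul_pow]
          have : (a i)^2 ≤ s^2 := by
            have := ha i
            nlinarith [has i]
          nlinarith [sq_nonneg (Lu i)]
      _ = s^2 * ∑ i, (Lu i)^2 := by rw [Finset.mul_sum]
      _ ≤ s^2 * (CL2 * U) := mul_le_mul_of_nonneg_left hLu_sq (sq_nonneg s)
  -- expansion
  have hexp : ∑ i, (u i - (g i - (∑ p, g p)/N))^2
      = U - 2 * (∑ i, u i * g i) + ∑ i, (g i - (∑ p, g p)/N)^2 := by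
    have h1 : ∀ i ∈ Finset.univ, (u i - (g i - (∑ p, g p)/N))^2
        = (u i)^2 - 2 * (u i * g i) + 2 * ((∑ p, g p)/N) * u i + (g i - (∑ p, g p)/N)^2 :=
      fun i _ => by ring
    rw [Finset.sum_congr rfl h1, Finset.sum_add_distrib, Finset.sum_add_distrib,
      Finset.sum_sub_distrib, ← Finset.mul_sum, ← Finset.mul_sum, hu0, ← hU]
    ring
  -- combine
  have hquad' : (s/N) * (lam * U) ≤ (s/N) * (∑ i, u i * Lu i) :=
    mul_le_mul_of_nonneg_left hquad (by positivity)
  calc ∑ i, (u i - (a i * (∑ j, L i j * u j)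
        - (∑ p, a p * (∑ j, L p j * u j)) / N)) ^ 2
      = ∑ i, (u i - (g i - (∑ p, g p)/N))^2 := rfl
    _ = U - 2 * (∑ i, u i * g i) + ∑ i, (g i - (∑ p, g p)/N)^2 := hexp
    _ ≤ U - 2 * ((s/N) * (lam * U) - d * (Real.sqrt CL2 * U)) + s^2 * (CL2 * U) := by
        have := hug
        linarith
    _ = (1 - 2*(s/N)*lam + 2*d*Real.sqrt CL2 + s^2*CL2) * U := by ring

private lemma aux_step {N : ℕ} (hN : 0 < N)
    {Ω : Type*} {mΩ : MeasurableSpace Ω} (μ : Measure Ω) [IsProbabilityMeasure μ]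
    (m : MeasurableSpace Ω) (hm : m ≤ mΩ)
    (L : Matrix (Fin N) (Fin N) ℝ) (hLrow : ∀ i, ∑ j, L i j = 0)
    (lam : ℝ)
    (hgap : ∀ v : Fin N → ℝ, (∑ i, v i) = 0 → lam * (∑ i, (v i)^2) ≤ v ⬝ᵥ L.mulVec v)
    (a : Fin N → ℝ) (ha : ∀ i, 0 < a i) (s d CL2 : ℝ)
    (hs : s = ∑ i, a i) (hd0 : 0 ≤ d) (hd : ∀ i j, |a i - a j| ≤ d)
    (hCL2 : CL2 = ∑ i, ∑ j, (L i j)^2)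
    (M : ℝ)
    (X W X' : Ω → Fin N → ℝ)
    (hXm : ∀ i, Measurable[m] fun ω => X ω i)
    (hXL2 : ∀ i, MemLp (fun ω => X ω i) 2 μ)
    (hWL2 : ∀ i, MemLp (fun ω => W ω i) 2 μ)
    (hWcond : ∀ i, μ[(fun ω => W ω i)|m] =ᵐ[μ] 0)
    (hWbound : ∫ ω, (∑ i, (W ω i)^2) ∂μ ≤ M)
    (hX' : ∀ ω i, X' ω i = X ω i - a i * (∑ j, L i j * X ω j) + a i * W ω i)
    (hkey : ∀ u : Fin N → ℝ, (∑ i, u i) = 0 →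
      ∑ i, (u i - (a i * (∑ j, L i j * u j)
          - (∑ p, a p * (∑ j, L p j * u j)) / N)) ^ 2
        ≤ (1 - 2*(s/N)*lam + 2*d*Real.sqrt CL2 + s^2*CL2) * ∑ i, (u i)^2) :
    ∫ ω, ∑ i, (X' ω i - (∑ j, X' ω j) / N) ^ 2 ∂μ
      ≤ (1 - 2*(s/N)*lam + 2*d*Real.sqrt CL2 + s^2*CL2)
          * ∫ ω, ∑ i, (X ω i - (∑ j, X ω j) / N) ^ 2 ∂μ + s^2 * M := by
  have hN0 : (0:ℝ) < N := by exact_mod_cast hN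
  set y : Ω → Fin N → ℝ := fun ω i => X ω i - (∑ j, X ω j) / N with hy
  set Lu : Ω → Fin N → ℝ := fun ω i => ∑ j, L i j * y ω j with hLu
  set g : Ω → Fin N → ℝ := fun ω i => a i * Lu ω i with hg
  set z : Ω → Fin N → ℝ := fun ω i => y ω i - (g ω i - (∑ p, g ω p) / N) with hz
  set nf : Ω → Fin N → ℝ := fun ω i => a i * W ω i - (∑ j, a j * W ω j) / N with hnf
  -- L2 membership
  have hyL2 : ∀ i, MemLp (fun ω => y ω i) 2 μ := fun i =>
    (hXL2 i).sub (aux_memLp_div_const (memLp_finset_sum Finset.univ fun j _ => hXL2 j) _)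
  have hLuL2 : ∀ i, MemLp (fun ω => Lu ω i) 2 μ := fun i =>
    memLp_finset_sum Finset.univ fun j _ => (hyL2 j).const_mul (L i j)
  have hgL2 : ∀ i, MemLp (fun ω => g ω i) 2 μ := fun i => (hLuL2 i).const_mul (a i)
  have hzL2 : ∀ i, MemLp (fun ω => z ω i) 2 μ := fun i =>
    (hyL2 i).sub ((hgL2 i).sub
      (aux_memLp_div_const (memLp_finset_sum Finset.univ fun p _ => hgL2 p) _))
  have hnL2 : ∀ i, MemLp (fun ω => nf ω i) 2 μ := fun i =>
    ((hWL2 i).const_mul (a i)).sub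
      (aux_memLp_div_const (memLp_finset_sum Finset.univ fun j _ => (hWL2 j).const_mul (a j)) _)
  -- measurability of z wrt m
  have hym : ∀ i, Measurable[m] fun ω => y ω i := fun i =>
    (hXm i).sub ((Finset.measurable_sum Finset.univ fun j _ => hXm j).div_const _)
  have hzm : ∀ i, Measurable[m] fun ω => z ω i := by
    intro i
    apply (hym i).sub
    apply Measurable.sub
    · exact (Finset.measurable_sum Finset.univ fun j _ => (hym j).const_mul (L i j)).const_mul (a i)
    · exact Measurable.div_const (Finset.measurable_sum Finset.univ fun p _ =>
        (Finset.measurable_sum Finset.univ fun j _ => (hym j).const_mul (L p j)).const_mul (a p)) _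
  -- cross terms vanish
  have hcrossij : ∀ i j, ∫ ω, z ω i * W ω j ∂μ = 0 := fun i j =>
    aux_cross_zero hm ((hzm i).stronglyMeasurable) (hzL2 i) (hWL2 j) (hWcond j)
  have intzw : ∀ i j, Integrable (fun ω => z ω i * W ω j) μ := fun i j =>
    aux_int_mul (hzL2 i) (hWL2 j)
  have hcross : ∀ i, ∫ ω, z ω i * nf ω i ∂μ = 0 := by
    intro i
    have hsplit : (fun ω => z ω i * nf ω i)
        = fun ω => a i * (z ω i * W ω i) - (N:ℝ)⁻¹ * (∑ j, a j * (z ω i * W ω j)) := by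
      funext ω
      have h0 : ∑ j, a j * (z ω i * W ω j) = z ω i * ∑ j, a j * W ω j := by
        rw [Finset.mul_sum]
        exact Finset.sum_congr rfl fun j _ => by ring
      simp only [hnf]
      rw [h0]
      ring
    rw [hsplit]
    rw [integral_sub ((intzw i i).const_mul (a i))
      ((integrable_finset_sum Finset.univ fun j _ => (intzw i j).const_mul (a j)).const_mul _),
      integral_const_mul, integral_const_mul,
      integral_finset_sum Finset.univ (fun j _ => (intzw i j).const_mul (a j))]
    have : ∀ j ∈ Finset.univ, ∫ ω, a j * (z ω i * W ω j) ∂μ = 0 := by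
      intro j _
      rw [integral_const_mul, hcrossij i j, mul_zero]
    rw [Finset.sum_congr rfl this]
    simp [hcrossij i i]
  -- identity for the next step
  have hid : ∀ ω i, X' ω i - (∑ j, X' ω j) / N = z ω i + nf ω i := by
    intro ω i
    have hS : ∑ j, X' ω j
        = (∑ j, X ω j) - (∑ j, a j * (∑ l, L j l * X ω l)) + ∑ j, a j * W ω j := by
      rw [Finset.sum_congr rfl fun j _ => hX' ω j, Finset.sum_add_distrib,
        Finset.sum_sub_distrib]
    have hLxy : ∀ j, (∑ l, L j l * X ω l) = Lu ω j := by
      intro j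
      have h1 : ∀ l ∈ Finset.univ, L j l * X ω l
          = L j l * y ω l + L j l * ((∑ p, X ω p) / N) := by
        intro l _
        simp only [hy]
        ring
      rw [Finset.sum_congr rfl h1, Finset.sum_add_distrib, ← Finset.sum_mul, hLrow j, hLu]
      simp
    rw [hX' ω i, hS]
    simp only [hLxy]
    simp only [hz, hnf, hg, hy]
    ring
  -- integrability of the squared/cross sums
  have int_z2 : Integrable (fun ω => ∑ i, (z ω i)^2) μ :=
    integrable_finset_sum Finset.univ fun i _ => (hzL2 i).integrable_sq
  have int_n2 : Integrable (fun ω => ∑ i, (nf ω i)^2) μ :=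
    integrable_finset_sum Finset.univ fun i _ => (hnL2 i).integrable_sq
  have int_zn : Integrable (fun ω => ∑ i, 2 * (z ω i * nf ω i)) μ :=
    integrable_finset_sum Finset.univ fun i _ => (aux_int_mul (hzL2 i) (hnL2 i)).const_mul 2
  have int_y2 : Integrable (fun ω => ∑ i, (y ω i)^2) μ :=
    integrable_finset_sum Finset.univ fun i _ => (hyL2 i).integrable_sq
  have int_w2 : Integrable (fun ω => ∑ i, (W ω i)^2) μ :=
    integrable_finset_sum Finset.univ fun i _ => (hWL2 i).integrable_sq
  -- expansion of the integral
  have hpt : ∀ ω, ∑ i, (X' ω i - (∑ j, X' ω j) / N) ^ 2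
      = (∑ i, (z ω i)^2) + ((∑ i, 2 * (z ω i * nf ω i)) + ∑ i, (nf ω i)^2) := by
    intro ω
    have h1 : ∀ i ∈ Finset.univ, (X' ω i - (∑ j, X' ω j) / N) ^ 2
        = (z ω i)^2 + (2 * (z ω i * nf ω i) + (nf ω i)^2) := by
      intro i _
      rw [hid ω i]
      ring
    rw [Finset.sum_congr rfl h1, Finset.sum_add_distrib, Finset.sum_add_distrib]
  have hVsplit : ∫ ω, ∑ i, (X' ω i - (∑ j, X' ω j) / N) ^ 2 ∂μ
      = (∫ ω, ∑ i, (z ω i)^2 ∂μ) + ((∫ ω, ∑ i, 2 * (z ω i * nf ω i) ∂μ)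
        + ∫ ω, ∑ i, (nf ω i)^2 ∂μ) := by
    have h1 : ∫ ω, ((∑ i, (z ω i)^2) + ((∑ i, 2 * (z ω i * nf ω i)) + ∑ i, (nf ω i)^2)) ∂μ
        = (∫ ω, ∑ i, (z ω i)^2 ∂μ)
          + ∫ ω, ((∑ i, 2 * (z ω i * nf ω i)) + ∑ i, (nf ω i)^2) ∂μ :=
      integral_add int_z2 (int_zn.add int_n2)
    have h2 : ∫ ω, ((∑ i, 2 * (z ω i * nf ω i)) + ∑ i, (nf ω i)^2) ∂μ
        = (∫ ω, ∑ i, 2 * (z ω i * nf ω i) ∂μ) + ∫ ω, ∑ i, (nf ω i)^2 ∂μ :=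
      integral_add int_zn int_n2
    rw [integral_congr_ae (Eventually.of_forall hpt), h1, h2]
  have hmid : ∫ ω, ∑ i, 2 * (z ω i * nf ω i) ∂μ = 0 := by
    rw [integral_finset_sum Finset.univ
      (fun i _ => (aux_int_mul (hzL2 i) (hnL2 i)).const_mul 2)]
    have : ∀ i ∈ Finset.univ, ∫ ω, 2 * (z ω i * nf ω i) ∂μ = 0 := by
      intro i _
      rw [integral_const_mul, hcross i, mul_zero]
    rw [Finset.sum_congr rfl this]
    simp
  -- pointwise bounds
  have hu0 : ∀ ω, ∑ i, y ω i = 0 := by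
    intro ω
    simp only [hy]
    rw [Finset.sum_sub_distrib, Finset.sum_const, Finset.card_univ, Fintype.card_fin,
      nsmul_eq_mul]
    field_simp
    ring
  have hzpt : ∀ ω, ∑ i, (z ω i)^2
      ≤ (1 - 2*(s/N)*lam + 2*d*Real.sqrt CL2 + s^2*CL2) * ∑ i, (y ω i)^2 := by
    intro ω
    have := hkey (y ω) (hu0 ω)
    simpa only [hz, hg, hLu] using this
  have hz_int_le : ∫ ω, ∑ i, (z ω i)^2 ∂μ
      ≤ (1 - 2*(s/N)*lam + 2*d*Real.sqrt CL2 + s^2*CL2) * ∫ ω, ∑ i, (y ω i)^2 ∂μ := by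
    rw [← integral_const_mul]
    exact integral_mono int_z2 (int_y2.const_mul _) fun ω => hzpt ω
  have hnpt : ∀ ω, ∑ i, (nf ω i)^2 ≤ s^2 * ∑ i, (W ω i)^2 := by
    intro ω
    have := aux_noise_bound hN a (fun i => (ha i).le) s hs (W ω)
    simpa only [hnf] using this
  have hn_int_le : ∫ ω, ∑ i, (nf ω i)^2 ∂μ ≤ s^2 * M := by
    calc ∫ ω, ∑ i, (nf ω i)^2 ∂μ ≤ ∫ ω, s^2 * ∑ i, (W ω i)^2 ∂μ :=
          integral_mono int_n2 (int_w2.const_mul _) fun ω => hnpt ω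
      _ = s^2 * ∫ ω, ∑ i, (W ω i)^2 ∂μ := integral_const_mul _ _
      _ ≤ s^2 * M := mul_le_mul_of_nonneg_left hWbound (sq_nonneg s)
  have hyV : ∫ ω, ∑ i, (X ω i - (∑ j, X ω j) / N) ^ 2 ∂μ = ∫ ω, ∑ i, (y ω i)^2 ∂μ := rfl
  rw [hVsplit, hmid, hyV]
  linarith
set_option maxHeartbeats 1600000 in
/-- Corollary 1 (weak consensus with heterogeneous stepsizes): if the agents' stepsizes
additionally satisfy `max_{i,j} |αᵢ(k) − αⱼ(k)| = o(∑ᵢ αᵢ(k))`, then `E[V(k)] → 0`. -/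
theorem weak_consensus_heterogeneous_stepsizes {N : ℕ} (hN : 2 ≤ N)
    {Ω : Type*} {mΩ : MeasurableSpace Ω} (μ : MeasureTheory.Measure Ω) [MeasureTheory.IsProbabilityMeasure μ]
    (ℱ : MeasureTheory.Filtration ℕ mΩ)
    (L : Matrix (Fin N) (Fin N) ℝ) (hLsymm : L.IsSymm)
    (hL1 : L.mulVec (fun _ => (1 : ℝ)) = 0)
    (hLoffdiag : ∀ i j, i ≠ j → L i j ≤ 0)
    (lam : ℝ) (hlam : 0 < lam)
    (hgap : ∀ v : Fin N → ℝ, (∑ i, v i) = 0 →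
      lam * (∑ i, (v i) ^ 2) ≤ v ⬝ᵥ L.mulVec v)
    (α : Fin N → ℕ → ℝ) (hα_pos : ∀ i k, 0 < α i k)
    (hα_div : ∀ i, Filter.Tendsto (fun n => ∑ k ∈ Finset.range n, α i k) Filter.atTop Filter.atTop)
    (hα_sq : ∀ i, Summable (fun k => (α i k) ^ 2))
    (hdiag : ∀ (i : Fin N) (k : ℕ), 0 < 1 - α i k * L i i)
    (M : ℝ) (hM : 0 ≤ M)
    (w : ℕ → Ω → Fin N → ℝ)
    (hw_meas : ∀ k, Measurable[ℱ (k + 1)] (w k))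
    (hw_L2 : ∀ k, MeasureTheory.MemLp (w k) 2 μ)
    (hw_cond : ∀ k i, μ[(fun ω => w k ω i) | ℱ k] =ᵐ[μ] 0)
    (hw_bound : ∀ k, ∫ ω, (∑ i, (w k ω i) ^ 2) ∂μ ≤ M)
    (x : ℕ → Ω → Fin N → ℝ) (ξ : Fin N → ℝ) (hx0 : ∀ ω, x 0 ω = ξ)
    (hx_meas : ∀ k, Measurable[ℱ k] (x k))
    (hrec : ∀ k ω, x (k + 1) ω =
      ((1 : Matrix (Fin N) (Fin N) ℝ)
          - (Matrix.diagonal fun i => α i k) * L).mulVec (x k ω)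
        + (Matrix.diagonal fun i => α i k).mulVec (w k ω))
    (hα_close : (fun k => ⨆ i : Fin N, ⨆ j : Fin N, |α i k - α j k|)
      =o[Filter.atTop] fun k => ∑ i, α i k) :
    Tendsto (fun k => ∫ ω, ∑ i, (x k ω i - (∑ j, x k ω j) / N) ^ 2 ∂μ)
      atTop (nhds 0) := by
  have hNpos : 0 < N := by omega
  have hN0 : (0:ℝ) < N := by exact_mod_cast hNpos
  -- coordinates of w are in L²
  have hwL2 : ∀ k i, MemLp (fun ω => w k ω i) 2 μ := by
    intro k i
    exact (ContinuousLinearMap.proj (R := ℝ) (φ := fun _ : Fin N => ℝ) i).comp_memLp' (hw_L2 k)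
  -- coordinate form of the recursion
  have hrec' : ∀ k ω i, x (k+1) ω i
      = x k ω i - α i k * (∑ j, L i j * x k ω j) + α i k * w k ω i := by
    intro k ω i
    have h := congrFun (hrec k ω) i
    rw [h]
    rw [Matrix.sub_mulVec, ← Matrix.mulVec_mulVec]
    simp only [Pi.add_apply, Pi.sub_apply, Matrix.one_mulVec, Matrix.mulVec_diagonal]
    simp [Matrix.mulVec, dotProduct]
  -- rows of L sum to zero
  have hLrow : ∀ i, ∑ j, L i j = 0 := by
    intro i
    have := congrFun hL1 i
    simpa [Matrix.mulVec, dotProduct] using this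
  -- coordinates of x are in L²
  have hxL2 : ∀ k i, MemLp (fun ω => x k ω i) 2 μ := by
    intro k
    induction k with
    | zero =>
      intro i
      have : (fun ω => x 0 ω i) = fun _ => ξ i := by funext ω; rw [hx0]
      rw [this]
      exact memLp_const _
    | succ k ih =>
      intro i
      have heq : (fun ω => x (k+1) ω i)
          = fun ω => x k ω i - α i k * (∑ j, L i j * x k ω j) + α i k * w k ω i := by
        funext ω; rw [hrec']
      rw [heq]
      exact ((ih i).sub ((memLp_finset_sum Finset.univ
        (fun j _ => ((ih j).const_mul (L i j)))).const_mul (α i k))).add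
        ((hwL2 k i).const_mul _)
  -- coordinates of x are measurable w.r.t. the filtration
  have hxm : ∀ k i, Measurable[ℱ k] (fun ω => x k ω i) :=
    fun k i => (measurable_pi_apply i).comp (hx_meas k)
  -- abbreviations
  set ss : ℕ → ℝ := fun k => ∑ i, α i k with hss_def
  set dd : ℕ → ℝ := fun k => ⨆ i : Fin N, ⨆ j : Fin N, |α i k - α j k| with hdd_def
  set CL2 : ℝ := ∑ i, ∑ j, (L i j)^2 with hCL2_def
  have hCL2nn : 0 ≤ CL2 := by
    rw [hCL2_def]
    exact Finset.sum_nonneg fun i _ => Finset.sum_nonneg fun j _ => sq_nonneg _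
  have hsqrtnn : 0 ≤ Real.sqrt CL2 := Real.sqrt_nonneg _
  have i0 : Fin N := ⟨0, hNpos⟩
  have hss_pos : ∀ k, 0 < ss k := by
    intro k
    rw [hss_def]
    exact Finset.sum_pos (fun i _ => hα_pos i k) ⟨i0, Finset.mem_univ i0⟩
  -- bounds on dd
  have hddle : ∀ k i j, |α i k - α j k| ≤ dd k := by
    intro k i j
    have h1 : |α i k - α j k| ≤ ⨆ j' : Fin N, |α i k - α j' k| :=
      le_ciSup (f := fun j' : Fin N => |α i k - α j' k|)
        (Set.Finite.bddAbove (Set.finite_range _)) j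
    have h2 : (⨆ j' : Fin N, |α i k - α j' k|) ≤ dd k := by
      rw [hdd_def]
      exact le_ciSup (f := fun i' : Fin N => ⨆ j' : Fin N, |α i' k - α j' k|)
        (Set.Finite.bddAbove (Set.finite_range _)) i
    exact h1.trans h2
  have hdd0 : ∀ k, 0 ≤ dd k := by
    intro k
    have := hddle k i0 i0
    simpa using this
  -- summability of ss²
  have hss_sq : Summable (fun k => (ss k)^2) := by
    have h1 : Summable (fun k => (∑ i, (α i k)^2) * (N:ℝ)) :=
      (summable_sum (fun i _ => hα_sq i)).mul_right _
    apply Summable.of_nonneg_of_le (fun k => sq_nonneg _) _ h1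
    intro k
    have h2 := Finset.sum_mul_sq_le_sq_mul_sq Finset.univ (fun i => α i k) (fun _ => (1:ℝ))
    simp only [mul_one, one_pow, Finset.sum_const, Finset.card_univ, Fintype.card_fin,
      nsmul_eq_mul, mul_one] at h2
    rw [hss_def]
    calc (∑ i, α i k)^2 ≤ (∑ i, (α i k)^2) * (N:ℝ) := by
          calc (∑ i, α i k)^2 ≤ (∑ i, (α i k)^2) * ((N:ℝ) * 1) := by simpa using h2
            _ = (∑ i, (α i k)^2) * (N:ℝ) := by ring
      _ = _ := rfl
  -- ss tends to 0
  have hss0 : Tendsto ss atTop (nhds 0) := by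
    have h2 : Tendsto (fun k => (ss k)^2) atTop (nhds 0) := hss_sq.tendsto_atTop_zero
    have h3 : Tendsto (fun k => Real.sqrt ((ss k)^2)) atTop (nhds (Real.sqrt 0)) :=
      (Real.continuous_sqrt.tendsto 0).comp h2
    have h4 : (fun k => Real.sqrt ((ss k)^2)) = ss := by
      funext k; exact Real.sqrt_sq (hss_pos k).le
    rw [h4] at h3
    simpa using h3
  -- partial sums of ss diverge
  have hss_div : Tendsto (fun n => ∑ k ∈ Finset.range n, ss k) atTop atTop := by
    apply tendsto_atTop_mono _ (hα_div i0)
    intro n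
    apply Finset.sum_le_sum
    intro k _
    rw [hss_def]
    exact Finset.single_le_sum (fun j _ => (hα_pos j k).le) (Finset.mem_univ i0)
  -- the Lyapunov sequence
  set V : ℕ → ℝ := fun k => ∫ ω, ∑ i, (x k ω i - (∑ j, x k ω j) / N) ^ 2 ∂μ with hV_def
  have hVnn : ∀ k, 0 ≤ V k := by
    intro k
    rw [hV_def]
    exact integral_nonneg fun ω => Finset.sum_nonneg fun i _ => sq_nonneg _
  -- the one-step inequality
  have hstep : ∀ k, V (k+1)
      ≤ (1 - 2*(ss k/N)*lam + 2*(dd k)*Real.sqrt CL2 + (ss k)^2*CL2) * V k + (ss k)^2 * M := by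
    intro k
    have := aux_step hNpos μ (ℱ k) (ℱ.le k) L hLrow lam hgap
      (fun i => α i k) (fun i => hα_pos i k) (ss k) (dd k) CL2
      (by rw [hss_def]) (hdd0 k) (fun i j => hddle k i j) (by rw [hCL2_def])
      M (x k) (w k) (x (k+1)) (fun i => hxm k i) (fun i => hxL2 k i)
      (fun i => hwL2 k i) (fun i => hw_cond k i) (hw_bound k)
      (fun ω i => hrec' k ω i)
      (fun u hu => aux_key_bound hNpos L lam hgap (fun i => α i k) (fun i => hα_pos i k)
        (ss k) (dd k) CL2 (by rw [hss_def]) (hdd0 k) (fun i j => hddle k i j)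
        (by rw [hCL2_def]) u hu)
    exact this
  -- choose the threshold K
  have hE1 : ∀ᶠ k in atTop, dd k ≤ lam / (2 * N * (Real.sqrt CL2 + 1)) * ss k := by
    have hc : 0 < lam / (2 * N * (Real.sqrt CL2 + 1)) := by positivity
    filter_upwards [hα_close.def hc] with k hk
    rw [Real.norm_eq_abs, Real.norm_eq_abs, abs_of_nonneg (hdd0 k),
      abs_of_nonneg (hss_pos k).le] at hk
    exact hk
  have hE2 : ∀ᶠ k in atTop, CL2 * ss k ≤ lam / (2 * N) := by
    have hc : 0 < lam / (2 * N * (CL2 + 1)) := by positivity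
    filter_upwards [hss0.eventually (gt_mem_nhds hc)] with k hk
    have h1 : CL2 * ss k ≤ CL2 * (lam / (2 * N * (CL2 + 1))) :=
      mul_le_mul_of_nonneg_left hk.le hCL2nn
    have h2 : CL2 * (lam / (2 * N * (CL2 + 1))) ≤ lam / (2 * N) := by
      rw [← mul_div_assoc, div_le_div_iff₀ (by positivity) (by positivity)]
      nlinarith [hCL2nn, hN0, hlam.le]
    linarith
  have hE3 : ∀ᶠ k in atTop, lam / N * ss k ≤ 1 := by
    have hc : 0 < (N:ℝ) / lam := by positivity
    filter_upwards [hss0.eventually (gt_mem_nhds hc)] with k hk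
    rw [div_mul_eq_mul_div, div_le_one hN0]
    calc lam * ss k ≤ lam * ((N:ℝ)/lam) := mul_le_mul_of_nonneg_left hk.le hlam.le
      _ = (N:ℝ) := by field_simp
  obtain ⟨K, hK⟩ := eventually_atTop.mp ((hE1.and hE2).and hE3)
  -- the comparison sequences
  set aseq : ℕ → ℝ := fun k => if k < K then 0 else lam / N * ss k - CL2 * (ss k)^2
    with haseq_def
  set eseq : ℕ → ℝ := fun k => (ss k)^2 * M with heseq_def
  have haseq_ge : ∀ k, K ≤ k → lam / (2*N) * ss k ≤ aseq k := by
    intro k hk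
    obtain ⟨⟨h1, h2⟩, h3⟩ := hK k hk
    rw [haseq_def]
    simp only [Nat.not_lt.mpr hk, if_false]
    have h4 : CL2 * (ss k)^2 ≤ lam / (2*N) * ss k := by
      have := mul_le_mul_of_nonneg_right h2 (hss_pos k).le
      calc CL2 * (ss k)^2 = (CL2 * ss k) * ss k := by ring
        _ ≤ lam / (2*N) * ss k := this
    have h5 : lam / N * ss k = 2 * (lam / (2*N) * ss k) := by field_simp
    linarith
  apply aux_seq_tendsto_zero V aseq eseq hVnn
  · -- 0 ≤ aseq
    intro k
    rw [haseq_def]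
    by_cases hk : k < K
    · simp [hk]
    · simp only [hk, if_false]
      have h := haseq_ge k (Nat.not_lt.mp hk)
      rw [haseq_def] at h
      simp only [hk, if_false] at h
      have : 0 ≤ lam / (2*N) * ss k := mul_nonneg (by positivity) (hss_pos k).le
      linarith
  · -- aseq ≤ 1
    intro k
    rw [haseq_def]
    by_cases hk : k < K
    · simp [hk]
    · simp only [hk, if_false]
      obtain ⟨⟨h1, h2⟩, h3⟩ := hK k (Nat.not_lt.mp hk)
      have h4 : 0 ≤ CL2 * (ss k)^2 := by positivity
      linarith
  · -- divergence of partial sums of aseq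
    have hdiv2 : Tendsto (fun n => lam / (2*N)
        * ((∑ k ∈ Finset.range n, ss k) + -(∑ k ∈ Finset.range K, ss k))) atTop atTop :=
      (tendsto_atTop_add_const_right atTop _ hss_div).const_mul_atTop (by positivity)
    apply tendsto_atTop_mono' atTop _ hdiv2
    filter_upwards [eventually_ge_atTop K] with n hn
    have hsplit : ∑ k ∈ Finset.range n, aseq k
        = (∑ k ∈ Finset.range K, aseq k) + ∑ k ∈ Finset.Ico K n, aseq k := by
      exact (Finset.sum_range_add_sum_Ico aseq hn).symm
    have hzero : ∑ k ∈ Finset.range K, aseq k = 0 := by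
      apply Finset.sum_eq_zero
      intro k hk
      rw [haseq_def]
      simp [Finset.mem_range.mp hk]
    have hlb : ∑ k ∈ Finset.Ico K n, lam / (2*N) * ss k ≤ ∑ k ∈ Finset.Ico K n, aseq k :=
      Finset.sum_le_sum fun k hk => haseq_ge k (Finset.mem_Ico.mp hk).1
    have heq2 : ∑ k ∈ Finset.Ico K n, lam / (2*N) * ss k
        = lam / (2*N) * ((∑ k ∈ Finset.range n, ss k) + -(∑ k ∈ Finset.range K, ss k)) := by
      rw [← Finset.mul_sum, Finset.sum_Ico_eq_sub _ hn]
      ring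
    rw [hsplit, hzero, zero_add]
    rw [heq2] at hlb
    exact hlb
  · -- 0 ≤ eseq
    intro k
    rw [heseq_def]
    positivity
  · -- summability of eseq
    rw [heseq_def]
    exact hss_sq.mul_right M
  · -- the recursion
    intro k hk
    obtain ⟨⟨h1, h2⟩, h3⟩ := hK k hk
    have hco : (1 - 2*(ss k/N)*lam + 2*(dd k)*Real.sqrt CL2 + (ss k)^2*CL2) ≤ 1 - aseq k := by
      rw [haseq_def]
      simp only [Nat.not_lt.mpr hk, if_false]
      -- 2 * dd k * sqrt CL2 ≤ lam / N * ss k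
      have h5 : 2 * dd k * Real.sqrt CL2
          ≤ 2 * (lam / (2 * N * (Real.sqrt CL2 + 1)) * ss k) * Real.sqrt CL2 := by
        have := mul_le_mul_of_nonneg_right h1 hsqrtnn
        nlinarith
      have hcoef : lam / (2 * N * (Real.sqrt CL2 + 1)) * (2 * Real.sqrt CL2) ≤ lam / N := by
        rw [div_mul_eq_mul_div, div_le_div_iff₀ (by positivity) hN0]
        nlinarith [hsqrtnn, hlam.le, hN0.le, mul_nonneg (mul_nonneg hlam.le hsqrtnn) hN0.le]
      have h6 : 2 * (lam / (2 * N * (Real.sqrt CL2 + 1)) * ss k) * Real.sqrt CL2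
          ≤ lam / N * ss k := by
        calc 2 * (lam / (2 * N * (Real.sqrt CL2 + 1)) * ss k) * Real.sqrt CL2
            = (lam / (2 * N * (Real.sqrt CL2 + 1)) * (2 * Real.sqrt CL2)) * ss k := by ring
          _ ≤ lam / N * ss k := mul_le_mul_of_nonneg_right hcoef (hss_pos k).le
      have hx : 2*(ss k/N)*lam - lam / N * ss k = lam / N * ss k := by ring
      linarith [h5, h6]
    calc V (k+1) ≤ (1 - 2*(ss k/N)*lam + 2*(dd k)*Real.sqrt CL2 + (ss k)^2*CL2) * V k
          + (ss k)^2 * M := hstep k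
      _ ≤ (1 - aseq k) * V k + (ss k)^2 * M :=
          add_le_add_left (mul_le_mul_of_nonneg_right hco (hVnn k)) _
      _ = (1 - aseq k) * V k + eseq k := by rw [heseq_def]
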